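/- A completely positive trace-preserving qubit map whose set of fixed density matrices is exactly two-dimensional does not exist: if a CPTP map on 2×2 matrices fixes 1, σ_y, σ_z (i.e., Λ(σ_z) = σ_z, Λ(σ_y) = σ_y, Λ(1) = 1, Λ(σ_x) = aσ_x + bσ_y + cσ_z), then complete positivity forces a = 1, b = c = 0, i.e., Λ is the identity map. -/

import Mathlib

open Matrix BigOperators ComplexOrder

noncomputable def sigmaX : Matrix (Fin 2) (Fin 2) ℂ := !![0, 1; 1, 0]
noncomputable def sigmaY : Matrix (Fin 2) (Fin 2) ℂ := !![0, -Complex.I; Complex.I, 0]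
noncomputable def sigmaZ : Matrix (Fin 2) (Fin 2) ℂ := !![1, 0; 0, -1]

/-- The trace-preserving, Hermiticity-preserving qubit map with `Λ(1) = 1`,
`Λ(σ_y) = σ_y`, `Λ(σ_z) = σ_z`, `Λ(σ_x) = aσ_x + bσ_y + cσ_z`, written via the
Pauli decomposition. -/
noncomputable def lambdaABC (a b c : ℝ) (M : Matrix (Fin 2) (Fin 2) ℂ) :
    Matrix (Fin 2) (Fin 2) ℂ :=
  (M.trace / 2) • (1 : Matrix (Fin 2) (Fin 2) ℂ)
    + ((sigmaX * M).trace / 2) • ((a : ℂ) • sigmaX + (b : ℂ) • sigmaY + (c : ℂ) • sigmaZ)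
    + ((sigmaY * M).trace / 2) • sigmaY
    + ((sigmaZ * M).trace / 2) • sigmaZ

noncomputable def choi (f : Matrix (Fin 2) (Fin 2) ℂ → Matrix (Fin 2) (Fin 2) ℂ) :
    Matrix (Fin 2 × Fin 2) (Fin 2 × Fin 2) ℂ :=
  Matrix.of fun p q => f (Matrix.single p.1 q.1 1) p.2 q.2

set_option maxHeartbeats 1000000 in
lemma quadAB (a b c : ℝ) (z : ℂ) :
    dotProduct (star (fun p : Fin 2 × Fin 2 => !![0, 1; z, 0] p.1 p.2))
      (choi (lambdaABC a b c) *ᵥ fun p : Fin 2 × Fin 2 => !![0, 1; z, 0] p.1 p.2)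
      = z * ((a + b*Complex.I - 1)/2) + (starRingEnd ℂ z) * ((a - b*Complex.I - 1)/2) := by
  simp [dotProduct, mulVec, choi, lambdaABC, sigmaX, sigmaY, sigmaZ, Matrix.trace_fin_two,
    Fintype.sum_prod_type, Fin.sum_univ_two, Matrix.mul_apply, Matrix.single,
    Matrix.one_apply, Matrix.vecHead, Matrix.vecTail]
  ring_nf
  rw [Complex.I_sq]
  ring

set_option maxHeartbeats 1000000 in
lemma quadC (a b c : ℝ) (t : ℝ) :
    dotProduct (star (fun p : Fin 2 × Fin 2 => !![0, 1; 0, (t : ℂ)] p.1 p.2))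
      (choi (lambdaABC a b c) *ᵥ fun p : Fin 2 × Fin 2 => !![0, 1; 0, (t : ℂ)] p.1 p.2)
      = ((t^2 - t*c : ℝ) : ℂ) := by
  simp [dotProduct, mulVec, choi, lambdaABC, sigmaX, sigmaY, sigmaZ, Matrix.trace_fin_two,
    Fintype.sum_prod_type, Fin.sum_univ_two, Matrix.mul_apply, Matrix.single,
    Matrix.one_apply, Matrix.vecHead, Matrix.vecTail]
  ring_nf

/-- A CPTP qubit map fixing `1, σ_y, σ_z` must be the identity: complete positivity
(positive semidefiniteness of the Choi matrix) forces `a = 1`, `b = 0`, `c = 0`.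
In particular no CPTP qubit map has a fixed-point set of density matrices of
dimension exactly two. -/
theorem no_two_dimensional_fixed_point_set (a b c : ℝ)
    (hCP : (choi (lambdaABC a b c)).PosSemidef) :
    a = 1 ∧ b = 0 ∧ c = 0 := by
  have key : ∀ z : ℂ,
      (0:ℂ) ≤ z * ((a + b*Complex.I - 1)/2) + (starRingEnd ℂ z) * ((a - b*Complex.I - 1)/2) := by
    intro z
    have h := (posSemidef_iff_dotProduct_mulVec.mp hCP).2 (fun p : Fin 2 × Fin 2 => !![0, 1; z, 0] p.1 p.2)
    rwa [quadAB a b c z] at h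
  have h1 := (Complex.le_def.mp (key 1)).1
  have h2 := (Complex.le_def.mp (key (-1))).1
  have h3 := (Complex.le_def.mp (key Complex.I)).1
  have h4 := (Complex.le_def.mp (key (-Complex.I))).1
  simp [Complex.add_re, Complex.mul_re, Complex.div_re, Complex.normSq] at h1 h2 h3 h4
  have hc : (0:ℂ) ≤ (((c/2)^2 - (c/2)*c : ℝ) : ℂ) := by
    have h := (posSemidef_iff_dotProduct_mulVec.mp hCP).2 (fun p : Fin 2 × Fin 2 => !![0, 1; 0, ((c/2 : ℝ) : ℂ)] p.1 p.2)
    rwa [quadC a b c (c/2)] at h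
  rw [Complex.zero_le_real] at hc
  refine ⟨by linarith, by linarith, by nlinarith⟩
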